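/- For real numbers a₀ and c > 0, the leading principal (n−1)×(n−1) submatrix W_n° of W_n has eigenvalues exactly {a₀ + c + 2c(i−1)}_{i=1}^{n−1}, which strictly interlace the eigenvalues {a₀ + 2c(i−1)}_{i=1}^{n} of W_n. -/

import Mathlib

/-- The 1-indexed off-diagonal magnitudes for the matrix `W_n`. -/
noncomputable def offW (n k : ℕ) : ℝ :=
  if k = n - 1 then Real.sqrt (n * (n - 1) / 2)
  else Real.sqrt (k * (2 * n - k - 1) / 4)

/-- The matrix `W_n`: symmetric tridiagonal with diagonal `a₀ + c(n-1)` and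
off-diagonal entries `-c · offW n k` at (1-indexed) position `(k, k+1)`. -/
noncomputable def Wmat (n : ℕ) (a₀ c : ℝ) : Matrix (Fin n) (Fin n) ℝ :=
  Matrix.of fun i j =>
    if (i : ℕ) = (j : ℕ) then a₀ + c * ((n : ℝ) - 1)
    else if (i : ℕ) + 1 = (j : ℕ) then -c * offW n ((i : ℕ) + 1)
    else if (j : ℕ) + 1 = (i : ℕ) then -c * offW n ((j : ℕ) + 1)
    else 0

/-- The leading principal submatrix of `W_n` of order `n-1`. -/
noncomputable def WmatSub (n : ℕ) (a₀ c : ℝ) : Matrix (Fin (n - 1)) (Fin (n - 1)) ℝ :=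
  (Wmat n a₀ c).submatrix (Fin.castLE (Nat.sub_le n 1)) (Fin.castLE (Nat.sub_le n 1))

namespace Stmt9Aux

open Polynomial

/-! ### The auxiliary polynomial `(1-X)^(2p+1) (1+X)^(2q+1)` and its coefficients -/

noncomputable def Pc (p q : ℕ) : ℝ[X] := (1 - X) ^ (2 * p + 1) * (1 + X) ^ (2 * q + 1)

noncomputable def phi (p q k : ℕ) : ℝ := (Pc p q).coeff k

lemma phi_keyid (p q : ℕ) :
    derivative (Pc p q) = derivative (Pc p q) * X ^ 2
      + C (2 * (q : ℝ) - 2 * (p : ℝ)) * Pc p q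
      - C (2 * (p : ℝ) + 2 * (q : ℝ) + 2) * (Pc p q * X) := by
  unfold Pc
  rw [derivative_mul, derivative_pow, derivative_pow]
  simp only [derivative_sub, derivative_add, derivative_one, derivative_X, zero_sub, zero_add,
    Nat.add_sub_cancel, Nat.cast_add, Nat.cast_mul, Nat.cast_ofNat, Nat.cast_one,
    C_add, C_sub, C_mul, map_ofNat, C_1, C_eq_natCast, mul_neg, mul_one]
  ring

lemma phi_zero (p q : ℕ) : phi p q 0 = 1 := by
  rw [phi, coeff_zero_eq_eval_zero, Pc]
  simp

lemma phi_rec0 (p q : ℕ) : phi p q 1 = (2 * (q : ℝ) - 2 * (p : ℝ)) * phi p q 0 := by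
  have h := congrArg (fun f => coeff f 0) (phi_keyid p q)
  simp only [coeff_add, coeff_sub, coeff_derivative, mul_coeff_zero, coeff_C_mul,
    coeff_X_pow, Nat.cast_zero, zero_add, mul_one, mul_zero, if_neg (by norm_num : ¬(2:ℕ) = 0),
    coeff_X_zero] at h
  simpa [phi] using h

lemma phi_recS (p q s : ℕ) :
    ((s : ℝ) + 2) * phi p q (s + 2)
      = (s : ℝ) * phi p q s + (2 * (q : ℝ) - 2 * (p : ℝ)) * phi p q (s + 1)
        - (2 * (p : ℝ) + 2 * (q : ℝ) + 2) * phi p q s := by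
  have h := congrArg (fun f => coeff f (s + 1)) (phi_keyid p q)
  simp only [coeff_add, coeff_sub, coeff_derivative, coeff_C_mul, coeff_mul_X,
    coeff_mul_X_pow'] at h
  rcases s with _ | s'
  · norm_num at h
    rw [phi, phi, phi]
    push_cast
    linarith [h]
  · have h2 : s' + 1 + 1 + 1 = s' + 1 + 2 := by omega
    rw [h2] at h
    rw [phi, phi, phi]
    push_cast at h ⊢
    linarith [h]

lemma one_sub_X_ne : (1 - X : ℝ[X]) ≠ 0 := fun h => by
  simpa using congrArg (fun f => coeff f 0) h

lemma one_add_X_ne : (1 + X : ℝ[X]) ≠ 0 := fun h => by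
  simpa using congrArg (fun f => coeff f 0) h

lemma rev_pow (f : ℝ[X]) (a : ℕ) : (f ^ a).reverse = f.reverse ^ a := by
  induction a with
  | zero => simpa using reverse_C (1 : ℝ)
  | succ a ih => rw [pow_succ, reverse_mul_of_domain, ih, pow_succ]

lemma rev_one_sub_X : (1 - X : ℝ[X]).reverse = X - 1 := by
  have hd : (1 - X : ℝ[X]).natDegree = 1 := by
    rw [show (1 - X : ℝ[X]) = -(X - C 1) by simp, natDegree_neg, natDegree_X_sub_C]
  ext n
  rw [coeff_reverse, hd]
  match n with
  | 0 => simp [revAt_le, coeff_one, coeff_X]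
  | 1 => simp [revAt_le, coeff_one, coeff_X]
  | (n + 2) => rw [revAt_eq_self_of_lt (by omega)]; simp [coeff_one, coeff_X]

lemma rev_one_add_X : (1 + X : ℝ[X]).reverse = 1 + X := by
  have hd : (1 + X : ℝ[X]).natDegree = 1 := by
    rw [show (1 + X : ℝ[X]) = X + C 1 by rw [C_1, add_comm], natDegree_X_add_C]
  ext n
  rw [coeff_reverse, hd]
  match n with
  | 0 => simp [revAt_le, coeff_one, coeff_X]
  | 1 => simp [revAt_le, coeff_one, coeff_X]
  | (n + 2) => rw [revAt_eq_self_of_lt (by omega)]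

lemma Pc_natDegree (p q : ℕ) : (Pc p q).natDegree = 2 * p + 2 * q + 2 := by
  have h1 : (1 - X : ℝ[X]).natDegree = 1 := by
    rw [show (1 - X : ℝ[X]) = -(X - C 1) by simp, natDegree_neg, natDegree_X_sub_C]
  have h2 : (1 + X : ℝ[X]).natDegree = 1 := by
    rw [show (1 + X : ℝ[X]) = X + C 1 by rw [C_1, add_comm], natDegree_X_add_C]
  rw [Pc, natDegree_mul (pow_ne_zero _ one_sub_X_ne) (pow_ne_zero _ one_add_X_ne),
    natDegree_pow, natDegree_pow, h1, h2]
  ring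

lemma Pc_reverse (p q : ℕ) : (Pc p q).reverse = -Pc p q := by
  rw [Pc, reverse_mul_of_domain, rev_pow, rev_pow, rev_one_sub_X, rev_one_add_X]
  rw [show (X - 1 : ℝ[X]) = -(1 - X) by ring, Odd.neg_pow ⟨p, by omega⟩]
  ring

lemma phi_mid (p q : ℕ) : phi p q (p + q + 1) = 0 := by
  have h := congrArg (fun f => coeff f (p + q + 1)) (Pc_reverse p q)
  simp only [coeff_reverse, coeff_neg, Pc_natDegree] at h
  rw [revAt_le (by omega), show 2 * p + 2 * q + 2 - (p + q + 1) = p + q + 1 by omega] at h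
  have : (Pc p q).coeff (p + q + 1) = 0 := by linarith
  rw [phi, this]

/-! ### Generalities about real matrices and spectra -/

lemma sqrt_key (s r : ℕ) :
    Real.sqrt (((s : ℝ) + 1) * ((r : ℝ) + 1))
        * Real.sqrt ((s.factorial : ℝ) * ((r + 1).factorial : ℝ))
      = ((r : ℝ) + 1) * Real.sqrt (((s + 1).factorial : ℝ) * (r.factorial : ℝ)) := by
  have L : Real.sqrt (((s : ℝ) + 1) * ((r : ℝ) + 1))
        * Real.sqrt ((s.factorial : ℝ) * ((r + 1).factorial : ℝ))
      = Real.sqrt ((((s : ℝ) + 1) * ((r : ℝ) + 1)) * ((s.factorial : ℝ) * ((r + 1).factorial : ℝ))) :=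
    (Real.sqrt_mul (by positivity) _).symm
  have R : Real.sqrt ((((r : ℝ) + 1) ^ 2) * (((s + 1).factorial : ℝ) * (r.factorial : ℝ)))
      = ((r : ℝ) + 1) * Real.sqrt (((s + 1).factorial : ℝ) * (r.factorial : ℝ)) := by
    rw [Real.sqrt_mul (by positivity), Real.sqrt_sq (by positivity)]
  rw [L, ← R]
  congr 1
  push_cast [Nat.factorial_succ]
  ring

lemma sum_ite_val {m : ℕ} (t : ℕ) (g : Fin m → ℝ) :
    (∑ j : Fin m, if (j : ℕ) = t then g j else 0) = if h : t < m then g ⟨t, h⟩ else 0 := by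
  split_ifs with h
  · rw [Finset.sum_eq_single_of_mem ⟨t, h⟩ (Finset.mem_univ _)]
    · simp
    · intro b _ hb
      exact if_neg fun hbt => hb (Fin.ext hbt)
  · exact Finset.sum_eq_zero fun j _ => if_neg fun hj => h (by rw [← hj]; exact j.isLt)

lemma mem_spec {N : ℕ} (M : Matrix (Fin N) (Fin N) ℝ) (x : ℝ) (v : Fin N → ℝ) (hv : v ≠ 0)
    (hMv : M.mulVec v = x • v) : x ∈ spectrum ℝ M := by
  rw [spectrum.mem_iff]
  intro hu
  rw [Matrix.isUnit_iff_isUnit_det, isUnit_iff_ne_zero] at hu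
  apply hu
  rw [← Matrix.exists_mulVec_eq_zero_iff]
  refine ⟨v, hv, ?_⟩
  rw [Matrix.sub_mulVec, Algebra.algebraMap_eq_smul_one, Matrix.smul_mulVec,
    Matrix.one_mulVec, hMv, sub_self]

lemma spec_root {N : ℕ} (M : Matrix (Fin N) (Fin N) ℝ) (x : ℝ) (hx : x ∈ spectrum ℝ M) :
    M.charpoly.IsRoot x := by
  rw [spectrum.mem_iff] at hx
  have hdet : (algebraMap ℝ (Matrix (Fin N) (Fin N) ℝ) x - M).det = 0 := by
    by_contra h
    exact hx ((Matrix.isUnit_iff_isUnit_det _).2 (isUnit_iff_ne_zero.2 h))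
  have key : M.charpoly.eval x = (algebraMap ℝ (Matrix (Fin N) (Fin N) ℝ) x - M).det := by
    rw [Matrix.charpoly, ← Polynomial.coe_evalRingHom, RingHom.map_det]
    congr 1
    ext i j
    by_cases h : i = j
    · subst h
      simp [Matrix.charmatrix_apply_eq, Algebra.algebraMap_eq_smul_one, Matrix.sub_apply,
        Matrix.smul_apply, Matrix.one_apply]
    · simp [Matrix.charmatrix_apply_ne _ _ _ h, Algebra.algebraMap_eq_smul_one, Matrix.sub_apply,
        Matrix.smul_apply, Matrix.one_apply, h]
  rw [Polynomial.IsRoot, key, hdet]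

/-! ### The eigenvectors -/

noncomputable def uvec (p q t : ℕ) : ℝ :=
  (-1) ^ t * phi p q t * Real.sqrt ((t.factorial : ℝ) * ((2 * (p + q + 1) - t).factorial : ℝ))

lemma uvec_top (p q : ℕ) : uvec p q (p + q + 1) = 0 := by
  rw [uvec, phi_mid]
  ring

lemma uvec_zero_pos (p q : ℕ) : 0 < uvec p q 0 := by
  rw [uvec, phi_zero]
  have h1 : (0:ℝ) < ((2 * (p + q + 1) - 0).factorial : ℝ) := by
    exact_mod_cast Nat.factorial_pos _
  simp only [pow_zero, one_mul, mul_one, Nat.factorial_zero, Nat.cast_one]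
  exact Real.sqrt_pos.2 h1

lemma offW_small (p q t : ℕ) (h1 : 1 ≤ t) (h2 : t ≤ p + q) :
    offW (p + q + 1 + 1) t = Real.sqrt ((t : ℝ) * (2 * ((p : ℝ) + q + 1) + 1 - t)) / 2 := by
  rw [offW, if_neg (by omega)]
  rw [show ((t : ℝ) * (2 * ((p + q + 1 + 1 : ℕ) : ℝ) - (t : ℝ) - 1) / 4)
      = ((t : ℝ) * (2 * ((p : ℝ) + q + 1) + 1 - t)) / 4 by push_cast; ring]
  have hnn : (0:ℝ) ≤ (t : ℝ) * (2 * ((p : ℝ) + q + 1) + 1 - t) := by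
    have h2' : (t : ℝ) ≤ (p : ℝ) + q := by exact_mod_cast h2
    have : (0:ℝ) ≤ (t:ℝ) := by positivity
    nlinarith
  rw [show ((t : ℝ) * (2 * ((p : ℝ) + q + 1) + 1 - t)) / 4
      = ((t : ℝ) * (2 * ((p : ℝ) + q + 1) + 1 - t)) / 2 ^ 2 by ring]
  rw [Real.sqrt_div hnn, Real.sqrt_sq (by norm_num : (0:ℝ) ≤ 2)]

lemma mid_term (p q t : ℕ) (h1 : 1 ≤ t) (h2 : t ≤ p + q + 1) (c : ℝ) :
    (-c * offW (p + q + 1 + 1) t) * uvec p q t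
      = (-c * (Real.sqrt ((t : ℝ) * (2 * ((p : ℝ) + q + 1) + 1 - t)) / 2)) * uvec p q t := by
  rcases eq_or_lt_of_le h2 with h | h
  · rw [h, uvec_top, mul_zero, mul_zero]
  · rw [offW_small p q t h1 (by omega)]

lemma row0 (p q : ℕ) (a₀ c : ℝ) :
    (a₀ + c * ((p : ℝ) + q + 1)) * uvec p q 0 + (-c * offW (p + q + 1 + 1) 1) * uvec p q 1
      = (a₀ + c + 2 * c * q) * uvec p q 0 := by
  rw [mid_term p q 1 le_rfl (by omega)]
  obtain ⟨w, hw⟩ : ∃ w, 2 * (p + q + 1) = w + 1 := ⟨2 * p + 2 * q + 1, by omega⟩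
  have hwR : 2 * ((p : ℝ) + q + 1) = (w : ℝ) + 1 := by
    have := congrArg (Nat.cast : ℕ → ℝ) hw
    push_cast at this
    linarith
  unfold uvec
  rw [hw, hwR]
  simp only [Nat.sub_zero, Nat.add_sub_cancel, pow_zero, pow_one, Nat.factorial_zero,
    Nat.factorial_one, Nat.cast_one, one_mul]
  have key := sqrt_key w 0
  simp only [Nat.factorial_zero, Nat.factorial_one, Nat.cast_one, Nat.cast_zero, zero_add,
    mul_one, one_mul] at key
  rw [show ((w:ℝ) + 1 + 1 - 1) = (w:ℝ) + 1 by ring, ← key]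
  linear_combination (Real.sqrt ((w : ℝ) + 1) * Real.sqrt ((w.factorial : ℝ)) * c / 2) * phi_rec0 p q

lemma rowS (p q s : ℕ) (hs : s + 1 < p + q + 1) (a₀ c : ℝ) :
    (a₀ + c * ((p : ℝ) + q + 1)) * uvec p q (s + 1)
      + (-c * offW (p + q + 1 + 1) (s + 2)) * uvec p q (s + 2)
      + (-c * offW (p + q + 1 + 1) (s + 1)) * uvec p q s
      = (a₀ + c + 2 * c * q) * uvec p q (s + 1) := by
  rw [mid_term p q (s + 2) (by omega) (by omega), offW_small p q (s + 1) (by omega) (by omega)]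
  obtain ⟨w, hw⟩ : ∃ w, 2 * (p + q + 1) = s + w + 2 := ⟨2 * p + 2 * q - s, by omega⟩
  have hwR : (w : ℝ) = 2 * (p : ℝ) + 2 * (q : ℝ) - (s : ℝ) := by
    have := congrArg (Nat.cast : ℕ → ℝ) hw
    push_cast at this
    linarith
  have hREC := phi_recS p q s
  have hK1 : Real.sqrt (((s : ℝ) + 2) * ((w : ℝ) + 1))
        * Real.sqrt (((s + 2).factorial : ℝ) * ((w).factorial : ℝ))
      = ((s : ℝ) + 2) * Real.sqrt (((s + 1).factorial : ℝ) * ((w + 1).factorial : ℝ)) := by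
    have h := sqrt_key w (s + 1)
    rw [mul_comm ((w : ℝ) + 1) _, mul_comm ((w.factorial : ℝ)) _,
      mul_comm (((w + 1).factorial : ℝ)) _] at h
    push_cast at h ⊢
    ring_nf at h ⊢
    exact h
  have hK2 : Real.sqrt (((s : ℝ) + 1) * ((w : ℝ) + 2))
        * Real.sqrt ((s.factorial : ℝ) * ((w + 2).factorial : ℝ))
      = ((w : ℝ) + 2) * Real.sqrt (((s + 1).factorial : ℝ) * ((w + 1).factorial : ℝ)) := by
    have h := sqrt_key s (w + 1)
    push_cast at h ⊢
    ring_nf at h ⊢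
    exact h
  unfold uvec
  rw [hw]
  rw [show s + w + 2 - (s + 1) = w + 1 from by omega, show s + w + 2 - (s + 2) = w from by omega,
    show s + w + 2 - s = w + 2 from by omega]
  rw [show ((s + 2 : ℕ) : ℝ) * (2 * ((p : ℝ) + q + 1) + 1 - ((s + 2 : ℕ) : ℝ))
      = ((s : ℝ) + 2) * ((w : ℝ) + 1) from by push_cast; linear_combination (-((s : ℝ) + 2)) * hwR,
    show ((s + 1 : ℕ) : ℝ) * (2 * ((p : ℝ) + q + 1) + 1 - ((s + 1 : ℕ) : ℝ))
      = ((s : ℝ) + 1) * ((w : ℝ) + 2) from by push_cast; linear_combination (-((s : ℝ) + 1)) * hwR]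
  linear_combination
    (-(c * (-1 : ℝ) ^ s / 2) * phi p q (s + 2)) * hK1
    + (-(c * (-1 : ℝ) ^ s / 2) * phi p q s) * hK2
    + (-(c * (-1 : ℝ) ^ s / 2) * Real.sqrt (((s + 1).factorial : ℝ) * ((w + 1).factorial : ℝ))) * hREC
    + (-(c * (-1 : ℝ) ^ s / 2) * Real.sqrt (((s + 1).factorial : ℝ) * ((w + 1).factorial : ℝ))
        * phi p q s) * hwR

lemma eigen (m q : ℕ) (hq : q < m) (a₀ c : ℝ) :
    (a₀ + c + 2 * c * q) ∈ spectrum ℝ (WmatSub (m + 1) a₀ c) := by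
  obtain ⟨p, rfl⟩ : ∃ p, m = p + q + 1 := ⟨m - q - 1, by omega⟩
  apply mem_spec _ _ (fun k : Fin (p + q + 1) => uvec p q (k : ℕ))
  · intro h
    have h0 := congrFun h (⟨0, by omega⟩ : Fin (p + q + 1))
    simp only [Pi.zero_apply] at h0
    exact absurd h0 (ne_of_gt (uvec_zero_pos p q))
  · funext k
    have hterm : ∀ j : Fin (p + q + 1),
        WmatSub (p + q + 1 + 1) a₀ c k j * uvec p q (j : ℕ)
          = (if (j : ℕ) = (k : ℕ)
              then (a₀ + c * (((p + q + 1 + 1 : ℕ) : ℝ) - 1)) * uvec p q (j : ℕ) else 0)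
            + (if (j : ℕ) = (k : ℕ) + 1
              then (-c * offW (p + q + 1 + 1) ((k : ℕ) + 1)) * uvec p q (j : ℕ) else 0)
            + (if (j : ℕ) + 1 = (k : ℕ)
              then (-c * offW (p + q + 1 + 1) ((j : ℕ) + 1)) * uvec p q (j : ℕ) else 0) := by
      intro j
      simp only [WmatSub, Matrix.submatrix_apply, Wmat, Matrix.of_apply, Fin.coe_castLE]
      split_ifs <;> first | (exfalso; omega) | ring
    show Matrix.mulVec _ _ k = _
    rw [Matrix.mulVec, dotProduct]
    rw [Finset.sum_congr rfl (fun j _ => hterm j), Finset.sum_add_distrib,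
      Finset.sum_add_distrib, sum_ite_val, sum_ite_val]
    rw [dif_pos k.isLt]
    simp only [Fin.val_mk, Pi.smul_apply, smul_eq_mul]
    have hmid : (if h : (k : ℕ) + 1 < p + q + 1
          then -c * offW (p + q + 1 + 1) ((k : ℕ) + 1) * uvec p q ((k : ℕ) + 1) else 0)
        = -c * offW (p + q + 1 + 1) ((k : ℕ) + 1) * uvec p q ((k : ℕ) + 1) := by
      split_ifs with h
      · rfl
      · have hk1 : (k : ℕ) + 1 = p + q + 1 := by omega
        rw [hk1, uvec_top, mul_zero]
    rw [hmid]
    have hD : (a₀ + c * (((p + q + 1 + 1 : ℕ) : ℝ) - 1)) = a₀ + c * ((p : ℝ) + q + 1) := by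
      push_cast; ring
    rw [hD]
    obtain hk | ⟨s, hk⟩ : (k : ℕ) = 0 ∨ ∃ s, (k : ℕ) = s + 1 := by
      rcases Nat.eq_zero_or_pos (k : ℕ) with h | h
      · exact Or.inl h
      · exact Or.inr ⟨(k : ℕ) - 1, by omega⟩
    · rw [hk]
      rw [Finset.sum_eq_zero fun (x : Fin (p + q + 1)) _ =>
        if_neg (by omega : ¬((x : ℕ) + 1 = 0))]
      simp only [Nat.zero_add]
      linear_combination row0 p q a₀ c
    · rw [hk]
      rw [Finset.sum_congr rfl (fun (x : Fin (p + q + 1)) _ =>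
        if_congr (by omega : ((x : ℕ) + 1 = s + 1) ↔ ((x : ℕ) = s)) rfl rfl)]
      rw [sum_ite_val, dif_pos (show s < p + q + 1 by omega)]
      simp only [Fin.val_mk]
      rw [show s + 1 + 1 = s + 2 from rfl]
      linear_combination rowS p q s (by omega) a₀ c

end Stmt9Aux

theorem stmt_9 (n : ℕ) (hn : 2 ≤ n) (a₀ c : ℝ) (hc : 0 < c) :
    spectrum ℝ (WmatSub n a₀ c) = {x : ℝ | ∃ i < n - 1, x = a₀ + c + 2 * c * (i : ℝ)} ∧
      ∀ i < n - 1,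
        a₀ + 2 * c * (i : ℝ) < a₀ + c + 2 * c * (i : ℝ) ∧
        a₀ + c + 2 * c * (i : ℝ) < a₀ + 2 * c * ((i : ℝ) + 1) := by
  obtain ⟨m, rfl⟩ : ∃ m, n = m + 1 := ⟨n - 1, by omega⟩
  have hm : 1 ≤ m := by omega
  constructor
  · ext x
    simp only [Set.mem_setOf_eq, Nat.add_sub_cancel]
    constructor
    · intro hx
      by_contra hcon
      push_neg at hcon
      have hroot := Stmt9Aux.spec_root _ _ hx
      have hmon : (WmatSub (m + 1) a₀ c).charpoly.Monic := Matrix.charpoly_monic _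
      have hdeg : (WmatSub (m + 1) a₀ c).charpoly.natDegree = m := by
        rw [Matrix.charpoly_natDegree_eq_dim]
        simp
      set S : Finset ℝ := (Finset.range m).image (fun i : ℕ => a₀ + c + 2 * c * (i : ℝ)) with hS
      have hxS : x ∉ S := by
        intro hxmem
        rw [hS, Finset.mem_image] at hxmem
        obtain ⟨i, hi, hix⟩ := hxmem
        exact hcon i (Finset.mem_range.1 hi) hix.symm
      have hsub : (insert x S).val ⊆ (WmatSub (m + 1) a₀ c).charpoly.roots := by
        intro y hy
        rw [Finset.mem_val, Finset.mem_insert] at hy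
        rw [Polynomial.mem_roots hmon.ne_zero]
        rcases hy with rfl | hyS
        · exact hroot
        · rw [hS, Finset.mem_image] at hyS
          obtain ⟨i, hi, rfl⟩ := hyS
          exact Stmt9Aux.spec_root _ _ (Stmt9Aux.eigen m i (Finset.mem_range.1 hi) a₀ c)
      have hcard := Polynomial.card_le_degree_of_subset_roots hsub
      rw [hdeg, Finset.card_insert_of_notMem hxS] at hcard
      have hScard : S.card = m := by
        rw [hS, Finset.card_image_of_injOn, Finset.card_range]
        intro i _ j _ hij
        have h2 : 2 * c * (i : ℝ) = 2 * c * (j : ℝ) := by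
          simp only at hij
          linarith
        have h3 : (i : ℝ) = (j : ℝ) := mul_left_cancel₀ (by positivity) h2
        exact_mod_cast h3
      omega
    · rintro ⟨i, hi, rfl⟩
      exact Stmt9Aux.eigen m i hi a₀ c
  · intro i _
    constructor
    · linarith
    · nlinarith
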